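/- Let k be a field of characteristic p, P a finite p-group, G a finite group containing P, and x, y, c, a ∈ G with c ∈ C_G(P ∩ xPx⁻¹), a ∈ P, and cx = ay·b for some b ∈ P where y normalizes P. Then for every cohomology class ζ ∈ H*(P, k), the class tr^P_{P∩xPx⁻¹} res^{xPx⁻¹}_{P∩xPx⁻¹} (ˣζ) equals |P : a⁻¹(P∩xPx⁻¹)a| · tr^P_{P∩yPy⁻¹} res^{yPy⁻¹}_{P∩yPy⁻¹}(ʸζ); in particular it equals ʸ-conjugated class scaled by the index, which vanishes in characteristic p unless x normalizes P. -/

import Mathlib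

/-- Conjugating a subgroup by a product is conjugating successively. -/
theorem map_conj_mul {G : Type*} [Group G] (Q : Subgroup G) (g h : G) :
    Q.map (MulAut.conj (g * h)).toMonoidHom
      = (Q.map (MulAut.conj h).toMonoidHom).map (MulAut.conj g).toMonoidHom := by
  rw [Subgroup.map_map]
  congr 1
  ext u
  simp [MulAut.conj, mul_assoc]

/-- `g` normalizes `P` iff conjugating `P` by `g` gives back `P`. -/
theorem map_conj_eq_iff {G : Type*} [Group G] (P : Subgroup G) (g : G) :
    P.map (MulAut.conj g).toMonoidHom = P ↔ g ∈ Subgroup.normalizer (P : Set G) := by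
  rw [Subgroup.mem_normalizer_iff]
  constructor
  · intro h n
    constructor
    · intro hn
      rw [← h]
      exact ⟨n, hn, rfl⟩
    · intro hn
      rw [← h] at hn
      obtain ⟨m, hm, hme⟩ := hn
      simp only [MulEquiv.coe_toMonoidHom, MulAut.conj_apply] at hme
      have : m = n := mul_left_cancel (mul_right_cancel hme)
      rwa [← this]
  · intro h
    ext n
    simp only [Subgroup.mem_map, MulEquiv.coe_toMonoidHom, MulAut.conj_apply]
    constructor
    · rintro ⟨m, hm, rfl⟩
      exact (h m).mp hm
    · intro hn
      refine ⟨g⁻¹ * n * g, (h _).mpr ?_, by group⟩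
      have he : g * (g⁻¹ * n * g) * g⁻¹ = n := by group
      rw [he]; exact hn

/-- Conjugation by a centralizing element fixes the subgroup. -/
theorem map_conj_eq_of_centralizer {G : Type*} [Group G] (S : Subgroup G) (c : G)
    (hc : c ∈ Subgroup.centralizer (S : Set G)) :
    S.map (MulAut.conj c).toMonoidHom = S := by
  ext n
  simp only [Subgroup.mem_map, MulEquiv.coe_toMonoidHom, MulAut.conj_apply]
  rw [Subgroup.mem_centralizer_iff] at hc
  constructor
  · rintro ⟨m, hm, rfl⟩
    have := hc m hm
    rw [← this, mul_assoc, mul_inv_cancel, mul_one]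
    exact hm
  · intro hn
    exact ⟨n, hn, by rw [← hc n hn, mul_assoc, mul_inv_cancel, mul_one]⟩

theorem map_conj_one {G : Type*} [Group G] (S : Subgroup G) :
    S.map (MulAut.conj (1 : G)).toMonoidHom = S := by
  ext n; simp

/-- Let `char k = p`, let `P ≤ G` be a finite `p`-group and let
`x, y, c, a, b ∈ G` with `c ∈ C_G(P ∩ ˣP)`, `a, b ∈ P`, `y ∈ N_G(P)` and `cx = ayb`.
Then for every `ζ ∈ H*(P,k)`,
`tr^P_{P∩ˣP} res^{ˣP}_{P∩ˣP}(ˣζ) = |P : a⁻¹(P∩ˣP)a| · tr^P_{P∩ʸP} res^{ʸP}_{P∩ʸP}(ʸζ)`,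
and in particular this class vanishes (in characteristic `p`) unless `x` normalizes `P`.
The cohomology rings `H*(Q,k)` are modelled abstractly as `k`-algebras `A Q` with
`k`-linear restriction, transfer and conjugation maps satisfying the standard (assumed
known) identities listed as hypotheses. -/
theorem stmt4 {k : Type*} [Field k] {p : ℕ} [Fact p.Prime] [CharP k p]
    {G : Type*} [Group G] [Finite G]
    (P : Subgroup G) (hP : IsPGroup p P)
    (A : Subgroup G → Type*) [∀ Q, Ring (A Q)] [∀ Q, Algebra k (A Q)]
    (res : ∀ Q R : Subgroup G, A Q →ₗ[k] A R)
    (tr : ∀ Q R : Subgroup G, A R →ₗ[k] A Q)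
    (conj : ∀ (g : G) (Q : Subgroup G), A Q →ₗ[k] A (Q.map (MulAut.conj g).toMonoidHom))
    -- standard identities for transfer, restriction and conjugation:
    (hfrob : ∀ (Q R : Subgroup G), R ≤ Q → ∀ (ζ : A Q) (τ : A R),
      tr Q R (res Q R ζ * τ) = ζ * tr Q R τ)
    (htr_one : ∀ (Q R : Subgroup G), R ≤ Q →
      tr Q R 1 = (R.relIndex Q : k) • (1 : A Q))
    (hres_comp : ∀ (Q R S : Subgroup G), S ≤ R → R ≤ Q → ∀ ζ : A Q,
      res R S (res Q R ζ) = res Q S ζ)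
    (hconj_res : ∀ (g : G) (Q R : Subgroup G), R ≤ Q → ∀ ζ : A Q,
      conj g R (res Q R ζ)
        = res (Q.map (MulAut.conj g).toMonoidHom) (R.map (MulAut.conj g).toMonoidHom)
            (conj g Q ζ))
    (hconj_comp : ∀ (g h : G) (Q : Subgroup G) (ζ : A Q),
      conj g (Q.map (MulAut.conj h).toMonoidHom) (conj h Q ζ)
        = cast (congrArg A (map_conj_mul Q g h)) (conj (g * h) Q ζ))
    (hconj_central : ∀ (S : Subgroup G) (c : G),
      c ∈ Subgroup.centralizer (S : Set G) →
      ∀ (hmap : S.map (MulAut.conj c).toMonoidHom = S) (η : A S),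
        conj c S η = cast (congrArg A hmap.symm) η)
    (htr_conjP : ∀ a : G, a ∈ P → ∀ (S : Subgroup G) (η : A S),
      tr P (S.map (MulAut.conj a).toMonoidHom) (conj a S η) = tr P S η)
    -- the situation of the statement:
    (x y c a b : G) (hy : y ∈ Subgroup.normalizer (P : Set G)) (ha : a ∈ P) (hb : b ∈ P)
    (hc : c ∈ Subgroup.centralizer
      ((P ⊓ P.map (MulAut.conj x).toMonoidHom : Subgroup G) : Set G))
    (hcx : c * x = a * y * b) :
    ∀ ζ : A P,
      tr P (P ⊓ P.map (MulAut.conj x).toMonoidHom)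
          (res (P.map (MulAut.conj x).toMonoidHom)
            (P ⊓ P.map (MulAut.conj x).toMonoidHom) (conj x P ζ))
        = (((P ⊓ P.map (MulAut.conj x).toMonoidHom).map
              (MulAut.conj a⁻¹).toMonoidHom).relIndex P : k) •
          tr P (P ⊓ P.map (MulAut.conj y).toMonoidHom)
            (res (P.map (MulAut.conj y).toMonoidHom)
              (P ⊓ P.map (MulAut.conj y).toMonoidHom) (conj y P ζ)) ∧
      (x ∉ Subgroup.normalizer (P : Set G) →
        tr P (P ⊓ P.map (MulAut.conj x).toMonoidHom)
            (res (P.map (MulAut.conj x).toMonoidHom)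
              (P ⊓ P.map (MulAut.conj x).toMonoidHom) (conj x P ζ)) = 0) := by
  -- HEq congruence helpers
  have res_hcongr : ∀ {Q Q' R R' : Subgroup G}, Q = Q' → R = R' →
      ∀ {ξ : A Q} {ξ' : A Q'}, HEq ξ ξ' → HEq (res Q R ξ) (res Q' R' ξ') := by
    intro Q Q' R R' hQ hR ξ ξ' hx'
    subst hQ; subst hR; rw [eq_of_heq hx']
  have tr_hcongr : ∀ {Q Q' R R' : Subgroup G}, Q = Q' → R = R' →
      ∀ {ξ : A R} {ξ' : A R'}, HEq ξ ξ' → HEq (tr Q R ξ) (tr Q' R' ξ') := by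
    intro Q Q' R R' hQ hR ξ ξ' hx'
    subst hQ; subst hR; rw [eq_of_heq hx']
  have conj_hcongr : ∀ (g : G) {Q Q' : Subgroup G}, Q = Q' →
      ∀ {ξ : A Q} {ξ' : A Q'}, HEq ξ ξ' → HEq (conj g Q ξ) (conj g Q' ξ') := by
    intro g Q Q' hQ ξ ξ' hx'
    subst hQ; rw [eq_of_heq hx']
  have hcomp : ∀ (g h : G) (Q : Subgroup G) (ξ : A Q),
      HEq (conj g (Q.map (MulAut.conj h).toMonoidHom) (conj h Q ξ)) (conj (g * h) Q ξ) := by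
    intro g h Q ξ
    rw [hconj_comp]
    exact cast_heq _ _
  have htrres : ∀ (R : Subgroup G), R ≤ P → ∀ ξ : A P,
      tr P R (res P R ξ) = (R.relIndex P : k) • ξ := by
    intro R hR ξ
    have h := hfrob P R hR ξ 1
    rw [mul_one, htr_one P R hR, mul_smul_comm, mul_one] at h
    exact h
  have htrresP : ∀ ξ : A P, tr P P (res P P ξ) = ξ := by
    intro ξ
    rw [htrres P le_rfl ξ, Subgroup.relIndex_self, Nat.cast_one, one_smul]
  -- inner conjugation is trivial on A P
  have hinner : ∀ b' : G, b' ∈ P → ∀ ξ : A P, HEq (conj b' P ξ) ξ := by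
    intro b' hb' ξ
    have hb'P : P.map (MulAut.conj b').toMonoidHom = P :=
      (map_conj_eq_iff P b').mpr (Subgroup.le_normalizer hb')
    have h1 := htr_conjP b' hb' P (res P P ξ)
    rw [hconj_res b' P P le_rfl, htrresP] at h1
    have h2 : HEq
        (tr P (P.map (MulAut.conj b').toMonoidHom)
          (res (P.map (MulAut.conj b').toMonoidHom) (P.map (MulAut.conj b').toMonoidHom)
            (conj b' P ξ)))
        (tr P P (res P P (cast (congrArg A hb'P) (conj b' P ξ)))) :=
      tr_hcongr rfl hb'P (res_hcongr hb'P hb'P (cast_heq _ _).symm)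
    rw [htrresP] at h2
    have h3 := eq_of_heq h2
    rw [h1] at h3
    have h4 : HEq (conj b' P ξ) (cast (congrArg A hb'P) (conj b' P ξ)) := (cast_heq _ _).symm
    exact h4.trans (heq_of_eq h3.symm)
  intro ζ
  set X := P.map (MulAut.conj x).toMonoidHom with hXdef
  set Yy := P.map (MulAut.conj y).toMonoidHom with hYdef
  set S := P ⊓ X with hSdef
  set V := P ⊓ Yy with hVdef
  set U := S.map (MulAut.conj a⁻¹).toMonoidHom with hUdef
  have hYP : Yy = P := by rw [hYdef]; exact (map_conj_eq_iff P y).mpr hy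
  have hVP : V = P := by rw [hVdef, hYP, inf_idem]
  have hSP : S ≤ P := by rw [hSdef]; exact inf_le_left
  have hSX : S ≤ X := by rw [hSdef]; exact inf_le_right
  have hSc : S.map (MulAut.conj c).toMonoidHom = S := map_conj_eq_of_centralizer S c hc
  have hbP : P.map (MulAut.conj b).toMonoidHom = P :=
    (map_conj_eq_iff P b).mpr (Subgroup.le_normalizer hb)
  have haP : P.map (MulAut.conj a).toMonoidHom = P :=
    (map_conj_eq_iff P a).mpr (Subgroup.le_normalizer ha)
  have hUa : U.map (MulAut.conj a).toMonoidHom = S := by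
    rw [hUdef, ← map_conj_mul, mul_inv_cancel]
    exact map_conj_one S
  have hUP : U ≤ P := by
    rw [hUdef]
    exact le_trans (Subgroup.map_mono hSP)
      (le_of_eq ((map_conj_eq_iff P a⁻¹).mpr (inv_mem (Subgroup.le_normalizer ha))))
  have hW : P.map (MulAut.conj (y * b)).toMonoidHom = P := by
    rw [map_conj_mul, hbP]
    exact (map_conj_eq_iff P y).mpr hy
  have hUW : U ≤ P.map (MulAut.conj (y * b)).toMonoidHom := by rw [hW]; exact hUP
  have hg : c * x = a * (y * b) := by rw [hcx, mul_assoc]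
  have hXc : X.map (MulAut.conj c).toMonoidHom
      = (P.map (MulAut.conj (y * b)).toMonoidHom).map (MulAut.conj a).toMonoidHom := by
    rw [hXdef, ← map_conj_mul, hg, map_conj_mul]
  set η := cast (congrArg A hYP) (conj y P ζ) with hηdef
  have hζη : HEq (conj y P ζ) η := by
    rw [hηdef]; exact (cast_heq _ _).symm
  have hω : HEq (conj (y * b) P ζ) η := by
    refine HEq.trans ?_ hζη
    refine HEq.trans (hcomp y b P ζ).symm ?_
    exact conj_hcongr y hbP (hinner b hb ζ)
  have hcc : HEq (conj c X (conj x P ζ))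
      (conj a (P.map (MulAut.conj (y * b)).toMonoidHom) (conj (y * b) P ζ)) := by
    refine HEq.trans (hcomp c x P ζ) ?_
    refine HEq.trans ?_ (hcomp a (y * b) P ζ).symm
    rw [hg]
  have key : tr P S (res X S (conj x P ζ)) = (U.relIndex P : k) • η := by
    have s1 : HEq (res X S (conj x P ζ)) (conj c S (res X S (conj x P ζ))) := by
      rw [hconj_central S c hc hSc]
      exact (cast_heq _ _).symm
    have s2 : conj c S (res X S (conj x P ζ))
        = res (X.map (MulAut.conj c).toMonoidHom) (S.map (MulAut.conj c).toMonoidHom)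
            (conj c X (conj x P ζ)) := hconj_res c X S hSX (conj x P ζ)
    have s3 : HEq
        (res (X.map (MulAut.conj c).toMonoidHom) (S.map (MulAut.conj c).toMonoidHom)
          (conj c X (conj x P ζ)))
        (res ((P.map (MulAut.conj (y * b)).toMonoidHom).map (MulAut.conj a).toMonoidHom)
          (U.map (MulAut.conj a).toMonoidHom)
          (conj a (P.map (MulAut.conj (y * b)).toMonoidHom) (conj (y * b) P ζ))) :=
      res_hcongr hXc (hSc.trans hUa.symm) hcc
    have s4 : res ((P.map (MulAut.conj (y * b)).toMonoidHom).map (MulAut.conj a).toMonoidHom)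
          (U.map (MulAut.conj a).toMonoidHom)
          (conj a (P.map (MulAut.conj (y * b)).toMonoidHom) (conj (y * b) P ζ))
        = conj a U (res (P.map (MulAut.conj (y * b)).toMonoidHom) U (conj (y * b) P ζ)) :=
      (hconj_res a (P.map (MulAut.conj (y * b)).toMonoidHom) U hUW (conj (y * b) P ζ)).symm
    have s5 : HEq (res X S (conj x P ζ))
        (conj a U (res (P.map (MulAut.conj (y * b)).toMonoidHom) U (conj (y * b) P ζ))) :=
      ((s1.trans (heq_of_eq s2)).trans s3).trans (heq_of_eq s4)
    have s6 : tr P S (res X S (conj x P ζ))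
        = tr P (U.map (MulAut.conj a).toMonoidHom)
            (conj a U (res (P.map (MulAut.conj (y * b)).toMonoidHom) U (conj (y * b) P ζ))) :=
      eq_of_heq (tr_hcongr rfl hUa.symm s5)
    have s7 := htr_conjP a ha U (res (P.map (MulAut.conj (y * b)).toMonoidHom) U (conj (y * b) P ζ))
    have s8 : res (P.map (MulAut.conj (y * b)).toMonoidHom) U (conj (y * b) P ζ)
        = res P U η := eq_of_heq (res_hcongr hW rfl hω)
    rw [s6, s7, s8, htrres U hUP η]
  have hRHS : tr P V (res Yy V (conj y P ζ)) = η := by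
    have t1 : HEq (res Yy V (conj y P ζ)) (res P P η) := res_hcongr hYP hVP hζη
    have t2 : tr P V (res Yy V (conj y P ζ)) = tr P P (res P P η) :=
      eq_of_heq (tr_hcongr rfl hVP t1)
    rw [t2, htrresP]
  refine ⟨?_, ?_⟩
  · rw [key, hRHS]
  · intro hx
    have hUne : U ≠ P := by
      intro hU
      apply hx
      have hSPeq : S = P := by rw [← hUa, hU, haP]
      have hPX : P ≤ X := by rw [hSdef] at hSPeq; exact inf_eq_left.mp hSPeq
      have hinj : Function.Injective ⇑(MulAut.conj x).toMonoidHom := (MulAut.conj x).injective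
      have hcard : Nat.card X = Nat.card P := by
        rw [hXdef]
        exact (Nat.card_congr (Subgroup.equivMapOfInjective P _ hinj).toEquiv).symm
      have hXP : P = X := Subgroup.eq_of_le_of_card_ge hPX hcard.le
      apply (map_conj_eq_iff P x).mp
      rw [← hXdef]
      exact hXP.symm
    have hdvd : p ∣ U.relIndex P := by
      have h1 : (U.subgroupOf P).index ∣ Nat.card P := Subgroup.index_dvd_card _
      obtain ⟨n, hn⟩ := IsPGroup.iff_card.mp hP
      rw [hn] at h1
      have hne1 : (U.subgroupOf P).index ≠ 1 := by
        intro h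
        rw [Subgroup.index_eq_one, Subgroup.subgroupOf_eq_top] at h
        exact hUne (le_antisymm hUP h)
      obtain ⟨m, _, hmeq⟩ := (Nat.dvd_prime_pow (Fact.out : p.Prime)).mp h1
      rcases Nat.eq_zero_or_pos m with hm0 | hm0
      · rw [hm0, pow_zero] at hmeq; exact absurd hmeq hne1
      · show p ∣ (U.subgroupOf P).index
        rw [hmeq]
        exact dvd_pow_self p hm0.ne'
    have hr0 : ((U.relIndex P : k)) = 0 := (CharP.cast_eq_zero_iff k p _).mpr hdvd
    rw [key, hr0, zero_smul]
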